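/- Suppose each element of a finite set T is assigned a two-element subset {v_α, w_α} of a finite set X, and consider the directed graph on T with an edge (α, β) whenever α > β and {v_α, w_α} ∩ {v_β, w_β} ≠ ∅. If every vertex has indegree at most 1 and outdegree at most 1, and moreover any edge (α,β) satisfies ι(α) > ι(β) for some labeling ι : T → {0,1,…,k−1}, then T is partitioned into directed paths (chains), each of length at most k, and if consecutive vertices on a chain share exactly one label in X while non-consecutive vertices on the same chain share none, then the image of each chain C in X has size exactly |C| + 1. -/

import Mathlib

namespace Stmt13Aux

open Classical in
noncomputable def step (E : ℤ → ℤ → Prop) (α : ℤ) : Option ℤ :=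
  if h : ∃ β, E α β then some h.choose else none

open Classical in
noncomputable def prevO (E : ℤ → ℤ → Prop) (α : ℤ) : Option ℤ :=
  if h : ∃ γ, E γ α then some h.choose else none

noncomputable def down (E : ℤ → ℤ → Prop) : ℕ → ℤ → List ℤ
  | 0, α => [α]
  | n+1, α => α :: (match step E α with | none => [] | some β => down E n β)

noncomputable def topF (E : ℤ → ℤ → Prop) : ℕ → ℤ → ℤ
  | 0, α => α
  | n+1, α => match prevO E α with | none => α | some γ => topF E n γ

noncomputable def iter (E : ℤ → ℤ → Prop) : ℕ → ℤ → Option ℤ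
  | 0, α => some α
  | n+1, α => (step E α).bind (iter E n)

variable {E : ℤ → ℤ → Prop}

theorem down_succ_none {α : ℤ} {n : ℕ} (hs : step E α = none) :
    down E (n+1) α = [α] := by simp [down, hs]

theorem down_succ_some {α β : ℤ} {n : ℕ} (hs : step E α = some β) :
    down E (n+1) α = α :: down E n β := by simp [down, hs]

theorem topF_succ_none {α : ℤ} {n : ℕ} (hp : prevO E α = none) :
    topF E (n+1) α = α := by simp [topF, hp]

theorem topF_succ_some {α γ : ℤ} {n : ℕ} (hp : prevO E α = some γ) :
    topF E (n+1) α = topF E n γ := by simp [topF, hp]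

theorem step_some (α β : ℤ) (h : step E α = some β) : E α β := by
  classical
  unfold step at h
  split at h
  · rename_i hex; cases h; exact hex.choose_spec
  · exact absurd h (by simp)

theorem step_eq_some (houtdeg : ∀ α β β', E α β → E α β' → β = β')
    (α β : ℤ) (h : E α β) : step E α = some β := by
  classical
  unfold step
  have hex : ∃ β, E α β := ⟨β, h⟩
  rw [dif_pos hex]
  exact congrArg some (houtdeg α _ _ hex.choose_spec h)

theorem prevO_some (α γ : ℤ) (h : prevO E α = some γ) : E γ α := by
  classical
  unfold prevO at h
  split at h
  · rename_i hex; cases h; exact hex.choose_spec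
  · exact absurd h (by simp)

theorem prevO_eq_some (hindeg : ∀ α α' β, E α β → E α' β → α = α')
    (α γ : ℤ) (h : E γ α) : prevO E α = some γ := by
  classical
  unfold prevO
  have hex : ∃ γ, E γ α := ⟨γ, h⟩
  rw [dif_pos hex]
  exact congrArg some (hindeg _ _ _ hex.choose_spec h)

theorem down_cons (n : ℕ) (α : ℤ) : ∃ t, down E n α = α :: t := by
  cases n with
  | zero => exact ⟨[], rfl⟩
  | succ n => exact ⟨_, rfl⟩

theorem chain'_down (n : ℕ) (α : ℤ) : (down E n α).Chain' E := by
  induction n generalizing α with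
  | zero => simp [down, List.Chain']
  | succ n ih =>
    cases hs : step E α with
    | none => rw [down_succ_none hs]; simp [List.Chain']
    | some β =>
      rw [down_succ_some hs]
      obtain ⟨t, ht⟩ := down_cons (E := E) n β
      rw [ht]
      exact List.IsChain.cons_cons (step_some α β hs) (ht ▸ ih β)

theorem mem_down_T {T : Finset ℤ} (hET : ∀ a b, E a b → b ∈ T) (n : ℕ) (α : ℤ)
    (hα : α ∈ T) : ∀ x ∈ down E n α, x ∈ T := by
  induction n generalizing α with
  | zero => intro x hx; simp [down] at hx; subst hx; exact hα
  | succ n ih =>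
    intro x hx
    cases hs : step E α with
    | none => simp [down, hs] at hx; subst hx; exact hα
    | some β =>
      simp only [down, hs] at hx
      rcases List.mem_cons.mp hx with h | h
      · subst h; exact hα
      · exact ih β (hET _ _ (step_some α β hs)) x h

theorem chain'_down_iota (ι : ℤ → ℕ) (hmono : ∀ α β, E α β → ι β < ι α)
    (n : ℕ) (α : ℤ) : (down E n α).Chain' (fun a b => ι b < ι a) :=
  List.IsChain.imp (fun a b h => hmono a b h) (chain'_down n α)

theorem nodup_down (ι : ℤ → ℕ) (hmono : ∀ α β, E α β → ι β < ι α)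
    (n : ℕ) (α : ℤ) : (down E n α).Nodup := by
  have h := chain'_down_iota ι hmono (E := E) n α
  haveI : IsTrans ℤ (fun a b => ι b < ι a) := ⟨fun _ _ _ h1 h2 => h2.trans h1⟩
  have hp := List.isChain_iff_pairwise.mp h
  exact hp.imp (fun h => by rintro rfl; exact lt_irrefl _ h)

theorem length_down_le (ι : ℤ → ℕ) (hmono : ∀ α β, E α β → ι β < ι α)
    (n : ℕ) (α : ℤ) : (down E n α).length ≤ ι α + 1 := by
  induction n generalizing α with
  | zero => simp [down]
  | succ n ih =>
    cases hs : step E α with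
    | none => simp [down, hs]
    | some β =>
      have hβ := hmono _ _ (step_some α β hs)
      simp only [down, hs, List.length_cons]
      have := ih β
      omega

theorem iter_succ' (n : ℕ) (α : ℤ) :
    iter E (n+1) α = (iter E n α).bind (step E) := by
  induction n generalizing α with
  | zero =>
    show (step E α).bind (iter E 0) = (some α).bind (step E)
    rw [Option.bind_some]
    cases step E α with
    | none => rfl
    | some β => rfl
  | succ n ih =>
    show (step E α).bind (iter E (n+1)) = (iter E (n+1) α).bind (step E)
    rw [show iter E (n+1) α = (step E α).bind (iter E n) from rfl]
    cases hs : step E α with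
    | none => rfl
    | some β => simpa using ih β

theorem mem_down_iff (n : ℕ) (α x : ℤ) :
    x ∈ down E n α ↔ ∃ i ≤ n, iter E i α = some x := by
  induction n generalizing α with
  | zero =>
    simp only [down, List.mem_singleton]
    constructor
    · rintro rfl; exact ⟨0, le_refl _, rfl⟩
    · rintro ⟨i, hi, h⟩
      interval_cases i
      exact (Option.some_inj.mp h).symm
  | succ n ih =>
    cases hs : step E α with
    | none =>
      simp only [down, hs, List.mem_singleton]
      constructor
      · rintro rfl; exact ⟨0, Nat.zero_le _, rfl⟩
      · rintro ⟨i, hi, h⟩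
        cases i with
        | zero => exact (Option.some_inj.mp h).symm
        | succ i =>
          rw [show iter E (i+1) α = (step E α).bind (iter E i) from rfl, hs] at h
          simp at h
    | some β =>
      simp only [down, hs, List.mem_cons]
      constructor
      · rintro (rfl | h)
        · exact ⟨0, Nat.zero_le _, rfl⟩
        · obtain ⟨i, hi, h⟩ := (ih β).mp h
          refine ⟨i+1, by omega, ?_⟩
          rw [show iter E (i+1) α = (step E α).bind (iter E i) from rfl, hs]
          exact h
      · rintro ⟨i, hi, h⟩
        cases i with
        | zero => exact Or.inl (Option.some_inj.mp h).symm
        | succ i =>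
          rw [show iter E (i+1) α = (step E α).bind (iter E i) from rfl, hs] at h
          exact Or.inr ((ih β).mpr ⟨i, by omega, h⟩)

theorem topF_mem_T {T : Finset ℤ} (hET : ∀ a b, E a b → a ∈ T) (n : ℕ) (α : ℤ)
    (hα : α ∈ T) : topF E n α ∈ T := by
  induction n generalizing α with
  | zero => exact hα
  | succ n ih =>
    cases hp : prevO E α with
    | none => simpa [topF, hp] using hα
    | some γ =>
      show (match prevO E α with | none => α | some γ => topF E n γ) ∈ T
      rw [hp]
      exact ih γ (hET _ _ (prevO_some α γ hp))

theorem topF_source (n : ℕ) (α : ℤ) (h : prevO E α = none) : topF E n α = α := by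
  cases n with
  | zero => rfl
  | succ n => show (match prevO E α with | none => α | some γ => topF E n γ) = α; rw [h]

theorem topF_add (m n : ℕ) (α : ℤ) : topF E (m + n) α = topF E n (topF E m α) := by
  induction m generalizing α with
  | zero => rw [Nat.zero_add]; rfl
  | succ m ih =>
    have hadd : m + 1 + n = (m + n) + 1 := by omega
    cases hp : prevO E α with
    | none =>
      rw [hadd, topF_succ_none hp, topF_succ_none hp, topF_source _ _ hp]
    | some γ =>
      rw [hadd, topF_succ_some hp, topF_succ_some hp, ih]

theorem reach_top (houtdeg : ∀ α β β', E α β → E α β' → β = β') (n : ℕ) (α : ℤ) :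
    ∃ i ≤ n, iter E i (topF E n α) = some α := by
  induction n generalizing α with
  | zero => exact ⟨0, le_refl _, rfl⟩
  | succ n ih =>
    cases hp : prevO E α with
    | none =>
      rw [topF_source _ _ hp]
      exact ⟨0, Nat.zero_le _, rfl⟩
    | some γ =>
      have h1 : topF E (n+1) α = topF E n γ := topF_succ_some hp
      obtain ⟨i, hi, h⟩ := ih γ
      refine ⟨i+1, by omega, ?_⟩
      rw [h1, iter_succ', h]
      simpa using step_eq_some houtdeg γ α (prevO_some α γ hp)

theorem top_of_reach (hindeg : ∀ α α' β, E α β → E α' β → α = α')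
    (i : ℕ) (δ α : ℤ) (h : iter E i δ = some α) : topF E i α = δ := by
  induction i generalizing α with
  | zero => exact (Option.some_inj.mp h).symm
  | succ i ih =>
    rw [iter_succ'] at h
    cases hit : iter E i δ with
    | none => rw [hit] at h; simp at h
    | some β =>
      rw [hit] at h
      rw [Option.bind_some] at h
      have hE' : E β α := step_some β α h
      have hp : prevO E α = some β := prevO_eq_some hindeg α β hE'
      rw [topF_succ_some hp]
      exact ih β hit

theorem up_stops {T : Finset ℤ} (k : ℕ) (ι : ℤ → ℕ) (hι : ∀ a ∈ T, ι a < k)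
    (hET : ∀ a b, E a b → a ∈ T) (hmono : ∀ α β, E α β → ι β < ι α)
    (n : ℕ) (α : ℤ) (hα : α ∈ T) (hn : k ≤ ι α + n) :
    prevO E (topF E n α) = none := by
  induction n generalizing α with
  | zero => exact absurd (hι α hα) (by omega)
  | succ n ih =>
    cases hp : prevO E α with
    | none => rw [topF_source _ _ hp]; exact hp
    | some γ =>
      have hE' : E γ α := prevO_some α γ hp
      rw [topF_succ_some hp]
      exact ih γ (hET _ _ hE') (by have := hmono _ _ hE'; omega)


theorem get!_of_mem : ∀ (l : List ℤ) (c : ℤ), c ∈ l → ∃ j, j < l.length ∧ l[j]! = c := by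
  intro l
  induction l with
  | nil => simp
  | cons a t ih =>
    intro c hc
    rcases List.mem_cons.mp hc with rfl | h
    · exact ⟨0, by simp, List.getElem!_cons_zero⟩
    · obtain ⟨j, hj, hg⟩ := ih c h
      exact ⟨j+1, by simpa using hj, by rw [List.getElem!_cons_succ]; exact hg⟩

theorem count_lemma (v w : ℤ → ℤ) (l : List ℤ) (hne : l ≠ [])
    (hvw : ∀ α ∈ l, v α ≠ w α)
    (hcons : ∀ m : ℕ, m + 1 < l.length →
      (({v (l[m]!), w (l[m]!)} ∩ {v (l[m+1]!), w (l[m+1]!)} : Finset ℤ)).card = 1)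
    (hfar : ∀ m m' : ℕ, m' < l.length → m + 1 < m' →
      (({v (l[m]!), w (l[m]!)} ∩ {v (l[m']!), w (l[m']!)} : Finset ℤ)) = ∅) :
    (l.toFinset.biUnion (fun α => ({v α, w α} : Finset ℤ))).card = l.length + 1 := by
  induction l with
  | nil => exact absurd rfl hne
  | cons a t ih =>
    cases t with
    | nil =>
      have h1 : ([a] : List ℤ).toFinset.biUnion (fun α => ({v α, w α} : Finset ℤ)) = {v a, w a} := by
        simp
      rw [h1, Finset.card_pair (hvw a (by simp))]
      simp
    | cons b t' =>
      have hcons' : ∀ m : ℕ, m + 1 < (b::t').length →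
          (({v ((b::t')[m]!), w ((b::t')[m]!)} ∩
            {v ((b::t')[m+1]!), w ((b::t')[m+1]!)} : Finset ℤ)).card = 1 := by
        intro m hm
        have := hcons (m+1) (by simpa using Nat.succ_lt_succ hm)
        rw [List.getElem!_cons_succ, List.getElem!_cons_succ] at this
        exact this
      have hfar' : ∀ m m' : ℕ, m' < (b::t').length → m + 1 < m' →
          (({v ((b::t')[m]!), w ((b::t')[m]!)} ∩
            {v ((b::t')[m']!), w ((b::t')[m']!)} : Finset ℤ)) = ∅ := by
        intro m m' hm' hmm
        have := hfar (m+1) (m'+1) (by simpa using Nat.succ_lt_succ hm') (by omega)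
        rw [List.getElem!_cons_succ, List.getElem!_cons_succ] at this
        exact this
      have ihl := ih (by simp) (fun α hα => hvw α (List.mem_cons_of_mem a hα)) hcons' hfar'
      have hA : ({v a, w a} : Finset ℤ).card = 2 := Finset.card_pair (hvw a (by simp))
      have hint : ({v a, w a} : Finset ℤ) ∩
          ((b::t').toFinset.biUnion (fun α => ({v α, w α} : Finset ℤ)))
          = ({v a, w a} ∩ {v b, w b} : Finset ℤ) := by
        ext x
        simp only [Finset.mem_inter, Finset.mem_biUnion, List.mem_toFinset]
        constructor
        · rintro ⟨hxA, c, hc, hxc⟩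
          rcases List.mem_cons.mp hc with rfl | hct
          · exact ⟨hxA, hxc⟩
          · obtain ⟨j, hj, hg⟩ := get!_of_mem t' c hct
            have hemp := hfar 0 (j+2) (by simp; omega) (by omega)
            rw [List.getElem!_cons_zero] at hemp
            rw [show (j:ℕ)+2 = (j+1)+1 from rfl, List.getElem!_cons_succ, List.getElem!_cons_succ, hg] at hemp
            exfalso
            have hx : x ∈ ({v a, w a} ∩ {v c, w c} : Finset ℤ) :=
              Finset.mem_inter.mpr ⟨hxA, hxc⟩
            rw [hemp] at hx
            exact absurd hx (Finset.notMem_empty x)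
        · rintro ⟨hxA, hxB⟩
          exact ⟨hxA, b, by simp, hxB⟩
      have h1 : ({v a, w a} ∩ {v b, w b} : Finset ℤ).card = 1 := by
        have := hcons 0 (by simp)
        rw [List.getElem!_cons_zero, List.getElem!_cons_succ, List.getElem!_cons_zero] at this
        exact this
      have hunion := Finset.card_union_add_card_inter ({v a, w a} : Finset ℤ)
        ((b::t').toFinset.biUnion (fun α => ({v α, w α} : Finset ℤ)))
      have hsplit : (a::b::t').toFinset.biUnion (fun α => ({v α, w α} : Finset ℤ))
          = ({v a, w a} : Finset ℤ) ∪
            ((b::t').toFinset.biUnion (fun α => ({v α, w α} : Finset ℤ))) := by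
        rw [List.toFinset_cons, Finset.biUnion_insert]
      rw [hsplit]
      rw [hint, h1, hA, ihl] at hunion
      simp only [List.length_cons] at hunion ⊢
      omega

end Stmt13Aux

open Stmt13Aux in
theorem stmt13
    (k : ℕ) (hk : 1 ≤ k)
    (T X : Finset ℤ) (v w : ℤ → ℤ)
    (hvX : ∀ α ∈ T, v α ∈ X) (hwX : ∀ α ∈ T, w α ∈ X)
    (hvw : ∀ α ∈ T, v α ≠ w α)
    (E : ℤ → ℤ → Prop)
    (hE : ∀ α β, E α β ↔ α ∈ T ∧ β ∈ T ∧ β < α ∧ (({v α, w α} ∩ {v β, w β} : Finset ℤ)).Nonempty)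
    (houtdeg : ∀ α β β', E α β → E α β' → β = β')
    (hindeg : ∀ α α' β, E α β → E α' β → α = α')
    (ι : ℤ → ℕ) (hι : ∀ α ∈ T, ι α < k)
    (hmono : ∀ α β, E α β → ι β < ι α) :
    ∃ P : Finset (List ℤ),
      (∀ l ∈ P, l ≠ [] ∧ l.Nodup ∧ (∀ α ∈ l, α ∈ T) ∧ l.Chain' E ∧ l.length ≤ k) ∧
      (∀ α ∈ T, ∃! l, l ∈ P ∧ α ∈ l) ∧
      (∀ l ∈ P,
        ((∀ m : ℕ, m + 1 < l.length →
            (({v (l[m]!), w (l[m]!)} ∩ {v (l[m+1]!), w (l[m+1]!)} : Finset ℤ)).card = 1) ∧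
         (∀ m m' : ℕ, m' < l.length → m + 1 < m' →
            (({v (l[m]!), w (l[m]!)} ∩ {v (l[m']!), w (l[m']!)} : Finset ℤ)) = ∅)) →
        (l.toFinset.biUnion (fun α => {v α, w α})).card = l.length + 1) := by
  classical
  have hET_a : ∀ a b, E a b → a ∈ T := fun a b h => ((hE a b).mp h).1
  have hET_b : ∀ a b, E a b → b ∈ T := fun a b h => ((hE a b).mp h).2.1
  refine ⟨T.image (fun α => down E k (topF E k α)), ?_, ?_, ?_⟩
  · intro l hl
    obtain ⟨β, hβ, rfl⟩ := Finset.mem_image.mp hl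
    have hs : topF E k β ∈ T := topF_mem_T hET_a k β hβ
    obtain ⟨t, ht⟩ := down_cons (E := E) k (topF E k β)
    refine ⟨by rw [ht]; simp, nodup_down ι hmono k _, mem_down_T hET_b k _ hs,
      chain'_down k _, ?_⟩
    have h1 := length_down_le ι hmono (E := E) k (topF E k β)
    have h2 := hι _ hs
    omega
  · intro α hα
    refine ⟨down E k (topF E k α), ⟨Finset.mem_image_of_mem _ hα, ?_⟩, ?_⟩
    · obtain ⟨i, hik, hiter⟩ := reach_top houtdeg (E := E) k α
      exact (mem_down_iff k _ α).mpr ⟨i, hik, hiter⟩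
    · rintro l ⟨hlP, hαl⟩
      obtain ⟨β, hβ, rfl⟩ := Finset.mem_image.mp hlP
      have hsrc : prevO E (topF E k β) = none :=
        up_stops k ι hι hET_a hmono k β hβ (by omega)
      obtain ⟨i, hik, hiter⟩ := (mem_down_iff k (topF E k β) α).mp hαl
      have htop : topF E i α = topF E k β := top_of_reach hindeg i _ α hiter
      have hfin : topF E k α = topF E k β := by
        have hadd := topF_add (E := E) i (k - i) α
        rw [show i + (k - i) = k from by omega] at hadd
        rw [hadd, htop, topF_source _ _ hsrc]
      rw [hfin]
  · intro l hl hhyp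
    obtain ⟨β, hβ, rfl⟩ := Finset.mem_image.mp hl
    have hs : topF E k β ∈ T := topF_mem_T hET_a k β hβ
    have hmem := mem_down_T hET_b (E := E) k (topF E k β) hs
    obtain ⟨t, ht⟩ := down_cons (E := E) k (topF E k β)
    exact count_lemma v w _ (by rw [ht]; simp) (fun α hα => hvw α (hmem α hα)) hhyp.1 hhyp.2
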